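/- Let A, B be nonempty closed convex subsets of a uniformly convex Banach space X and T a p-cyclic φ-contraction mapping. If (x,y) ∈ A × B is a coupled best proximity point of T, then T(T(x,y), T(y,x)) = x and T(T(y,x), T(x,y)) = y. -/
import Mathlib


open Filter Topology

/-- `setDist A B = inf {‖a - b‖ : a ∈ A, b ∈ B}`. -/
noncomputable def setDist {X : Type*} [NormedAddCommGroup X] (A B : Set X) : ℝ :=
  sInf {d : ℝ | ∃ a ∈ A, ∃ b ∈ B, d = ‖a - b‖}

lemma setDist_le {X : Type*} [NormedAddCommGroup X] {A B : Set X} {a b : X}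
    (ha : a ∈ A) (hb : b ∈ B) : setDist A B ≤ ‖a - b‖ := by
  apply csInf_le
  · exact ⟨0, fun d ⟨a, _, b, _, hd⟩ => hd ▸ norm_nonneg _⟩
  · exact ⟨a, ha, b, hb, rfl⟩

lemma key_eq {X : Type*} [NormedAddCommGroup X] [NormedSpace ℝ X] [UniformConvexSpace X]
    {A B : Set X} (hAconv : Convex ℝ A) {u a b : X} (hu : u ∈ B) (ha : a ∈ A) (hb : b ∈ A)
    (h1 : ‖u - a‖ = setDist A B) (h2 : ‖u - b‖ = setDist A B) : a = b := by
  by_contra hne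
  have hne' : u - a ≠ u - b := fun h => hne (sub_right_injective h)
  have hlt : ‖(1 / 2 : ℝ) • ((u - a) + (u - b))‖ < ‖u - a‖ :=
    (norm_midpoint_lt_iff (by rw [h1, h2])).mpr hne'
  have hm : ((1:ℝ)/2) • a + ((1:ℝ)/2) • b ∈ A := hAconv ha hb (by norm_num) (by norm_num) (by norm_num)
  have : setDist A B ≤ ‖(((1:ℝ)/2) • a + ((1:ℝ)/2) • b) - u‖ := setDist_le hm hu
  have heq : (1 / 2 : ℝ) • ((u - a) + (u - b)) = -((((1:ℝ)/2) • a + ((1:ℝ)/2) • b) - u) := by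
    module
  rw [heq, norm_neg] at hlt
  rw [h1] at hlt
  linarith

theorem stmt18 {X : Type*} [NormedAddCommGroup X] [NormedSpace ℝ X] [UniformConvexSpace X] [CompleteSpace X]
    (A B : Set X) (hA : A.Nonempty) (hB : B.Nonempty)
    (T : X → X → X) (φ : ℝ → ℝ)
    (hφmono : StrictMonoOn φ (Set.Ici 0)) (hφpos : ∀ t ≥ (0:ℝ), 0 ≤ φ t)
    (hTB : ∀ x ∈ A, ∀ y ∈ B, T x y ∈ B)
    (hTA : ∀ x ∈ B, ∀ y ∈ A, T x y ∈ A)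
    (hT : ∀ x₁ ∈ A, ∀ y₁ ∈ B, ∀ x₂ ∈ B, ∀ y₂ ∈ A,
      ‖T x₁ y₁ - T x₂ y₂‖ ≤ ‖((x₁, y₁) : X × X) - (x₂, y₂)‖
        - φ ‖((x₁, y₁) : X × X) - (x₂, y₂)‖ + φ (setDist A B))
    (hAcl : IsClosed A) (hBcl : IsClosed B) (hAconv : Convex ℝ A) (hBconv : Convex ℝ B)
    (x' y' : X) (hx' : x' ∈ A) (hy' : y' ∈ B)
    (h1 : ‖x' - T x' y'‖ = setDist A B) (h2 : ‖y' - T y' x'‖ = setDist A B) :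
    T (T x' y') (T y' x') = x' ∧ T (T y' x') (T x' y') = y' := by
  set d := setDist A B with hd
  set u := T x' y' with hu
  set v := T y' x' with hv
  have huB : u ∈ B := hTB x' hx' y' hy'
  have hvA : v ∈ A := hTA y' hy' x' hx'
  have hTuvA : T u v ∈ A := hTA u huB v hvA
  have hTvuB : T v u ∈ B := hTB v hvA u huB
  have hnorm1 : ‖((x', y') : X × X) - (u, v)‖ = d := by
    rw [Prod.mk_sub_mk, Prod.norm_def]
    show max ‖x' - u‖ ‖y' - v‖ = d
    rw [h1, h2, max_self]
  have hnorm2 : ‖((v, u) : X × X) - (y', x')‖ = d := by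
    rw [Prod.mk_sub_mk, Prod.norm_def]
    show max ‖v - y'‖ ‖u - x'‖ = d
    rw [norm_sub_rev v y', norm_sub_rev u x', h1, h2, max_self]
  -- first bound
  have hb1 : ‖u - T u v‖ ≤ d := by
    have := hT x' hx' y' hy' u huB v hvA
    rw [hnorm1] at this; linarith
  have he1 : ‖u - T u v‖ = d :=
    le_antisymm hb1 (by rw [← norm_sub_rev]; exact setDist_le hTuvA huB)
  have hb2 : ‖v - T v u‖ ≤ d := by
    have := hT v hvA u huB y' hy' x' hx'
    rw [hnorm2, norm_sub_rev] at this; linarith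
  have he2 : ‖v - T v u‖ = d := le_antisymm hb2 (setDist_le hvA hTvuB)
  constructor
  · exact key_eq hAconv huB hTuvA hx' he1 (by rw [norm_sub_rev]; exact h1.symm ▸ h1)
  · -- v ∈ A, T v u ∈ B, y' ∈ B : use key_eq with roles of A,B swapped
    have h2' : ‖v - y'‖ = d := by rw [norm_sub_rev]; exact h2
    -- need symmetric version
    exact key_eq (A := B) (B := A) (by
      intro a ha b hb s t hs ht hst
      exact hBconv ha hb hs ht hst) hvA hTvuB hy'
      (by rw [show setDist B A = d from ?_]; exact he2
          rw [hd]; unfold setDist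
          congr 1; ext r
          constructor
          · rintro ⟨a, ha, b, hb, rfl⟩; exact ⟨b, hb, a, ha, (norm_sub_rev _ _)⟩
          · rintro ⟨a, ha, b, hb, rfl⟩; exact ⟨b, hb, a, ha, (norm_sub_rev _ _)⟩)
      (by rw [show setDist B A = d from ?_]; exact h2'
          rw [hd]; unfold setDist
          congr 1; ext r
          constructor
          · rintro ⟨a, ha, b, hb, rfl⟩; exact ⟨b, hb, a, ha, (norm_sub_rev _ _)⟩
          · rintro ⟨a, ha, b, hb, rfl⟩; exact ⟨b, hb, a, ha, (norm_sub_rev _ _)⟩)
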